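/- Let R be a local commutative ring. Then the Grothendieck–Witt group GW(R) is generated as a group by the classes ⟨a⟩ for units a ∈ R^×. In fact, for every symmetric bilinear space (M, φ) over R, the orthogonal direct sum (M, φ) ⊥ ⟨1⟩ admits an orthogonal basis, so [M, φ] = Σ_i [⟨a_i⟩] − [⟨1⟩] for suitable units a_i ∈ R^×. -/

import Mathlib

open TensorProduct

universe u

/-- A symmetric bilinear space over a commutative ring `R`: a finitely generated projective
`R`-module together with a symmetric bilinear form inducing an isomorphism onto the dual. -/
structure SymBilSpace (R : Type u) [CommRing R] : Type (u + 1) where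
  M : Type u
  [isAddCommGroup : AddCommGroup M]
  [isModule : Module R M]
  projective : Module.Projective R M
  finite : Module.Finite R M
  form : M →ₗ[R] M →ₗ[R] R
  symm : ∀ x y, form x y = form y x
  nondeg : Function.Bijective fun x ↦ form x

attribute [instance] SymBilSpace.isAddCommGroup SymBilSpace.isModule

namespace SymBilSpace

variable {R : Type u} [CommRing R]

/-- Isometry of symmetric bilinear spaces. -/
def Isometric (V W : SymBilSpace R) : Prop :=
  ∃ e : V.M ≃ₗ[R] W.M, ∀ x y, W.form (e x) (e y) = V.form x y

/-- Orthogonal direct sum of symmetric bilinear spaces. -/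
noncomputable def orthSum (V W : SymBilSpace R) : SymBilSpace R where
  M := V.M × W.M
  projective := by have := V.projective; have := W.projective; infer_instance
  finite := by have := V.finite; have := W.finite; infer_instance
  form := V.form.compl₁₂ (LinearMap.fst R V.M W.M) (LinearMap.fst R V.M W.M)
        + W.form.compl₁₂ (LinearMap.snd R V.M W.M) (LinearMap.snd R V.M W.M)
  symm := by
    intro x y
    simp only [LinearMap.add_apply, LinearMap.compl₁₂_apply, LinearMap.fst_apply,
      LinearMap.snd_apply]
    rw [V.symm x.1 y.1, W.symm x.2 y.2]
  nondeg := by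
    have key : (fun x ↦ (V.form.compl₁₂ (LinearMap.fst R V.M W.M) (LinearMap.fst R V.M W.M)
          + W.form.compl₁₂ (LinearMap.snd R V.M W.M) (LinearMap.snd R V.M W.M)) x)
        = (Module.dualProdDualEquivDual R V.M W.M) ∘
            (Prod.map (fun x ↦ V.form x) (fun y ↦ W.form y)) := by
      funext x
      ext y
      · simp [Module.dualProdDualEquivDual]
      · simp [Module.dualProdDualEquivDual]
    rw [key]
    exact (Module.dualProdDualEquivDual R V.M W.M).bijective.comp
      (V.nondeg.prodMap W.nondeg)

/-- The rank one symmetric bilinear space `⟨a⟩` associated to a unit `a`, given by the form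
`(x, y) ↦ a * x * y` on `R`. -/
noncomputable def unit (R : Type u) [CommRing R] (a : Rˣ) : SymBilSpace R where
  M := R
  projective := inferInstance
  finite := inferInstance
  form := LinearMap.mk₂ R (fun x y => (a : R) * x * y)
    (fun x x' y => by ring) (fun c x y => by simp [smul_eq_mul]; ring)
    (fun x y y' => by ring) (fun c x y => by simp [smul_eq_mul]; ring)
  symm := fun x y => by simp [LinearMap.mk₂_apply]; ring
  nondeg := by
    constructor
    · intro x y h
      have h1 : (a : R) * x * 1 = (a : R) * y * 1 := by
        have := congrArg (fun f : R →ₗ[R] R => f 1) h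
        simpa [LinearMap.mk₂_apply] using this
      have h2 : (a : R) * x = (a : R) * y := by simpa using h1
      calc x = (a⁻¹ : Rˣ) * ((a : R) * x) := by
                rw [← mul_assoc, Units.inv_mul, one_mul]
        _ = (a⁻¹ : Rˣ) * ((a : R) * y) := by rw [h2]
        _ = y := by rw [← mul_assoc, Units.inv_mul, one_mul]
    · intro f
      refine ⟨(a⁻¹ : Rˣ) * f 1, ?_⟩
      apply LinearMap.ext
      intro y
      have : f y = y * f 1 := by
        conv_lhs => rw [← mul_one y, ← smul_eq_mul, map_smul, smul_eq_mul]
      simp only [LinearMap.mk₂_apply]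
      rw [this]
      rw [show (a : R) * ((a⁻¹ : Rˣ) * f 1) * y = ((a : R) * (a⁻¹ : Rˣ)) * (f 1 * y) by ring,
        Units.mul_inv, one_mul, mul_comm]

/-- The hyperbolic plane over `R`: `R²` with the form of Gram matrix `[[0,1],[1,0]]`. -/
noncomputable def hyperbolic (R : Type u) [CommRing R] : SymBilSpace R where
  M := R × R
  projective := inferInstance
  finite := inferInstance
  form := LinearMap.mk₂ R (fun x y => x.1 * y.2 + x.2 * y.1)
    (fun x x' y => by simp [Prod.fst_add, Prod.snd_add]; ring)
    (fun c x y => by simp [Prod.smul_fst, Prod.smul_snd, smul_eq_mul]; ring)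
    (fun x y y' => by simp [Prod.fst_add, Prod.snd_add]; ring)
    (fun c x y => by simp [Prod.smul_fst, Prod.smul_snd, smul_eq_mul]; ring)
  symm := fun x y => by simp [LinearMap.mk₂_apply]; ring
  nondeg := by
    constructor
    · intro x y h
      have h1 := congrArg (fun f : R × R →ₗ[R] R => f (1, 0)) h
      have h2 := congrArg (fun f : R × R →ₗ[R] R => f (0, 1)) h
      simp only [LinearMap.mk₂_apply, mul_zero, mul_one, zero_add, add_zero] at h1 h2
      exact Prod.ext h2 h1
    · intro f
      refine ⟨(f (0, 1), f (1, 0)), ?_⟩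
      apply LinearMap.ext
      intro y
      have hy : y = y.1 • ((1 : R), (0 : R)) + y.2 • ((0 : R), (1 : R)) := by
        ext <;> simp
      have hfy : f y = y.1 * f (1, 0) + y.2 * f (0, 1) := by
        conv_lhs => rw [hy]
        rw [map_add, map_smul, map_smul, smul_eq_mul, smul_eq_mul]
      simp only [LinearMap.mk₂_apply]
      rw [hfy]
      ring

end SymBilSpace

/-- The defining relations of the Grothendieck-Witt group: the class of an orthogonal sum is
the sum of the classes, and isometric spaces have equal classes. -/
def gwRelation (R : Type u) [CommRing R] :
    FreeAbelianGroup (SymBilSpace R) → FreeAbelianGroup (SymBilSpace R) → Prop := fun x y =>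
  (∃ V W : SymBilSpace R, x = FreeAbelianGroup.of (V.orthSum W) ∧
      y = FreeAbelianGroup.of V + FreeAbelianGroup.of W) ∨
  (∃ V W : SymBilSpace R, V.Isometric W ∧ x = FreeAbelianGroup.of V ∧
      y = FreeAbelianGroup.of W)

/-- The additive congruence generated by the Grothendieck-Witt relations. -/
def gwCon (R : Type u) [CommRing R] : AddCon (FreeAbelianGroup (SymBilSpace R)) :=
  addConGen (gwRelation R)

/-- The Grothendieck-Witt group of a commutative ring: the group completion of the monoid of
isometry classes of symmetric bilinear spaces under orthogonal direct sum. -/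
def GW (R : Type u) [CommRing R] : Type (u + 1) := (gwCon R).Quotient

noncomputable instance (R : Type u) [CommRing R] : AddCommGroup (GW R) :=
  { (inferInstance : AddGroup ((gwCon R).Quotient)) with
    add_comm := fun a b => AddCon.induction_on₂ a b fun x y => by
      show ((x + y : FreeAbelianGroup (SymBilSpace R)) : (gwCon R).Quotient) = ↑(y + x)
      rw [add_comm] }

/-- The Grothendieck-Witt class of a symmetric bilinear space. -/
def GWclass {R : Type u} [CommRing R] (V : SymBilSpace R) : GW R :=
  (gwCon R).mk' (FreeAbelianGroup.of V)

/-- The orthogonal complement of a submodule with respect to a bilinear form. -/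
def orthComp {R : Type u} [CommRing R] {M : Type u} [AddCommGroup M] [Module R M]
    (φ : M →ₗ[R] M →ₗ[R] R) (N : Submodule R M) : Submodule R M where
  carrier := {m | ∀ n ∈ N, φ m n = 0}
  add_mem' := fun {x y} hx hy => by
    intro n hn
    simp [hx n hn, hy n hn]
  zero_mem' := by intro n hn; simp
  smul_mem' := fun c x hx => by
    intro n hn
    simp [hx n hn]

/-- A bilinear pairing between two modules is perfect if both induced maps to the duals
are bijective. -/
def IsPerfect {R : Type u} [CommRing R] {P Q : Type u} [AddCommGroup P] [Module R P]
    [AddCommGroup Q] [Module R Q] (β : P →ₗ[R] Q →ₗ[R] R) : Prop :=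
  (Function.Bijective fun x ↦ β x) ∧ (Function.Bijective fun y ↦ β.flip y)

/-- The hyperbolic-type symmetric bilinear space on `P ⊕ Q` associated to a perfect pairing
`β : P × Q → R`, with form `((x,y),(x',y')) ↦ β x y' + β x' y`. -/
noncomputable def hypPair {R : Type u} [CommRing R] {P Q : Type u} [AddCommGroup P] [Module R P]
    [AddCommGroup Q] [Module R Q] (hP : Module.Projective R P) (hP' : Module.Finite R P)
    (hQ : Module.Projective R Q) (hQ' : Module.Finite R Q)
    (β : P →ₗ[R] Q →ₗ[R] R) (hβ : IsPerfect β) : SymBilSpace R where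
  M := P × Q
  projective := by infer_instance
  finite := by infer_instance
  form := β.compl₁₂ (LinearMap.fst R P Q) (LinearMap.snd R P Q)
        + β.flip.compl₁₂ (LinearMap.snd R P Q) (LinearMap.fst R P Q)
  symm := by
    intro x y
    simp only [LinearMap.add_apply, LinearMap.compl₁₂_apply, LinearMap.fst_apply,
      LinearMap.snd_apply, LinearMap.flip_apply]
    exact add_comm _ _
  nondeg := by
    have key : (fun x ↦ (β.compl₁₂ (LinearMap.fst R P Q) (LinearMap.snd R P Q)
          + β.flip.compl₁₂ (LinearMap.snd R P Q) (LinearMap.fst R P Q)) x)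
        = (Module.dualProdDualEquivDual R P Q) ∘
            (Prod.map (fun y ↦ β.flip y) (fun x ↦ β x)) ∘ ⇑(Equiv.prodComm P Q) := by
      funext x
      ext y
      · simp [Module.dualProdDualEquivDual]
      · simp [Module.dualProdDualEquivDual]
    rw [key]
    exact (Module.dualProdDualEquivDual R P Q).bijective.comp
      ((hβ.2.prodMap hβ.1).comp (Equiv.prodComm P Q).bijective)



variable {R : Type} [CommRing R]

lemma GWclass_orthSum (V W : SymBilSpace R) :
    GWclass (V.orthSum W) = GWclass V + GWclass W := by
  have h : (gwCon R) (FreeAbelianGroup.of (V.orthSum W))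
      (FreeAbelianGroup.of V + FreeAbelianGroup.of W) :=
    AddConGen.Rel.of _ _ (Or.inl ⟨V, W, rfl, rfl⟩)
  have := (AddCon.eq (gwCon R)).mpr h
  show (gwCon R).mk' _ = (gwCon R).mk' _ + (gwCon R).mk' _
  rw [← map_add]
  exact this

lemma GWclass_isometric {V W : SymBilSpace R} (h : V.Isometric W) :
    GWclass V = GWclass W :=
  (AddCon.eq (gwCon R)).mpr (AddConGen.Rel.of _ _ (Or.inr ⟨V, W, h, rfl, rfl⟩))

lemma GWclass_zero (V : SymBilSpace R) (h : Subsingleton V.M) : GWclass V = 0 := by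
  have h2 : Subsingleton (V.orthSum V).M := by
    show Subsingleton (V.M × V.M); infer_instance
  have hiso : V.Isometric (V.orthSum V) := by
    refine ⟨LinearEquiv.ofLinear 0 0 (by ext x; exact Subsingleton.elim _ _)
      (by ext x; exact Subsingleton.elim _ _), fun x y => ?_⟩
    have hx : x = 0 := Subsingleton.elim _ _
    have hy : y = 0 := Subsingleton.elim _ _
    subst hx; subst hy
    simp
  have := GWclass_isometric hiso
  rw [GWclass_orthSum] at this
  exact right_eq_add.mp this

/-- Diagonal space with unit entries. -/
noncomputable def diagSpace (m : ℕ) (a : Fin m → Rˣ) : SymBilSpace R where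
  M := Fin m → R
  projective := inferInstance
  finite := inferInstance
  form := LinearMap.mk₂ R (fun x y => ∑ i, (a i : R) * x i * y i)
    (fun x x' y => by
      rw [← Finset.sum_add_distrib]; exact Finset.sum_congr rfl fun i _ => by
        simp [Pi.add_apply]; ring)
    (fun c x y => by
      show _ = c • ∑ i, (a i : R) * x i * y i
      rw [smul_eq_mul, Finset.mul_sum]; exact Finset.sum_congr rfl fun i _ => by
        simp [Pi.smul_apply, smul_eq_mul]; ring)
    (fun x y y' => by
      rw [← Finset.sum_add_distrib]; exact Finset.sum_congr rfl fun i _ => by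
        simp [Pi.add_apply]; ring)
    (fun c x y => by
      show _ = c • ∑ i, (a i : R) * x i * y i
      rw [smul_eq_mul, Finset.mul_sum]; exact Finset.sum_congr rfl fun i _ => by
        simp [Pi.smul_apply, smul_eq_mul]; ring)
  symm := fun x y => by
    simp only [LinearMap.mk₂_apply]
    exact Finset.sum_congr rfl fun i _ => by ring
  nondeg := by
    constructor
    · intro x y h
      funext j
      have h1 := congrArg (fun f : (Fin m → R) →ₗ[R] R => f (Pi.single j 1)) h
      simp only [LinearMap.mk₂_apply] at h1
      rw [Finset.sum_eq_single j, Finset.sum_eq_single j] at h1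
      · simp only [Pi.single_eq_same, mul_one] at h1
        exact (Units.mul_right_inj (a j)).mp h1
      · intro i _ hij; simp [Pi.single_eq_of_ne hij]
      · intro hj; exact absurd (Finset.mem_univ j) hj
      · intro i _ hij; simp [Pi.single_eq_of_ne hij]
      · intro hj; exact absurd (Finset.mem_univ j) hj
    · intro f
      refine ⟨fun j => ((a j)⁻¹ : Rˣ) * f (Pi.single j 1), ?_⟩
      apply LinearMap.ext
      intro y
      simp only [LinearMap.mk₂_apply]
      rw [LinearMap.pi_apply_eq_sum_univ f y]
      refine Finset.sum_congr rfl fun i _ => ?_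
      have : (fun j => if i = j then (1:R) else 0) = Pi.single i 1 := by
        funext j; simp [Pi.single_apply, eq_comm]
      rw [this]
      rw [show ((a i : R)) * (((a i)⁻¹ : Rˣ) * f (Pi.single i 1)) * y i
        = (((a i : R)) * ((a i)⁻¹ : Rˣ)) * (f (Pi.single i 1) * y i) by ring]
      rw [Units.mul_inv, one_mul, smul_eq_mul, mul_comm]

/-- The coordinate splitting of `Fin (m+1) → R`. -/
noncomputable def piSuccEquiv (m : ℕ) : (Fin (m+1) → R) ≃ₗ[R] R × (Fin m → R) where
  toFun x := (x 0, x ∘ Fin.succ)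
  invFun p := Fin.cons p.1 p.2
  map_add' x y := rfl
  map_smul' c x := rfl
  left_inv x := by
    funext i
    refine Fin.cases ?_ (fun j => ?_) i <;> simp
  right_inv p := by
    refine Prod.ext ?_ ?_
    · simp
    · funext j; simp

lemma GWclass_diag (m : ℕ) (a : Fin m → Rˣ) :
    GWclass (diagSpace m a) = ∑ i, GWclass (SymBilSpace.unit R (a i)) := by
  induction m with
  | zero =>
    rw [Finset.univ_eq_empty, Finset.sum_empty]
    exact GWclass_zero _ (by
      show Subsingleton (Fin 0 → R); infer_instance)
  | succ m ih =>
    have hiso : (diagSpace (m+1) a).Isometric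
        ((SymBilSpace.unit R (a 0)).orthSum (diagSpace m (fun i => a i.succ))) := by
      refine ⟨piSuccEquiv m, fun x y => ?_⟩
      show _ = ∑ i, (a i : R) * x i * y i
      simp only [SymBilSpace.orthSum, SymBilSpace.unit, diagSpace, piSuccEquiv,
        LinearMap.add_apply, LinearMap.compl₁₂_apply, LinearMap.fst_apply,
        LinearMap.snd_apply, LinearMap.mk₂_apply, LinearEquiv.coe_mk]
      rw [Fin.sum_univ_succ]
      rfl
    rw [GWclass_isometric hiso, GWclass_orthSum, ih, Fin.sum_univ_succ]


variable {R : Type} [CommRing R]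

section Split

variable {M : Type} [AddCommGroup M] [Module R M]
variable (φ : M →ₗ[R] M →ₗ[R] R)

/-- Projection onto the orthogonal complement of a vector of unit length. -/
noncomputable def corefl (v : M) (hv : IsUnit (φ v v)) : M →ₗ[R] M :=
  LinearMap.id - (LinearMap.toSpanSingleton R M v) ∘ₗ (((hv.unit⁻¹ : Rˣ) : R) • (φ v))

lemma corefl_apply (v : M) (hv : IsUnit (φ v v)) (x : M) :
    corefl φ v hv x = x - (((hv.unit⁻¹ : Rˣ) : R) * φ v x) • v := by
  simp [corefl, LinearMap.toSpanSingleton_apply, mul_smul, LinearMap.smul_apply, smul_eq_mul]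

lemma phi_corefl (v : M) (hv : IsUnit (φ v v)) (x : M) :
    φ v (corefl φ v hv x) = 0 := by
  rw [corefl_apply, map_sub, map_smul, smul_eq_mul]
  have : (((hv.unit⁻¹ : Rˣ) : R) * φ v x) * φ v v
      = (((hv.unit⁻¹ : Rˣ) : R) * (hv.unit : R)) * φ v x := by
    rw [IsUnit.unit_spec]; ring
  rw [this, Units.inv_mul, one_mul, sub_self]

lemma corefl_mem (v : M) (hv : IsUnit (φ v v)) (x : M) :
    corefl φ v hv x ∈ LinearMap.ker (φ v) :=
  LinearMap.mem_ker.mpr (phi_corefl φ v hv x)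

lemma corefl_of_mem (v : M) (hv : IsUnit (φ v v)) {x : M}
    (hx : x ∈ LinearMap.ker (φ v)) : corefl φ v hv x = x := by
  rw [corefl_apply, LinearMap.mem_ker.mp hx, mul_zero, zero_smul, sub_zero]

lemma corefl_self (v : M) (hv : IsUnit (φ v v)) : corefl φ v hv v = 0 := by
  rw [corefl_apply]
  rw [IsUnit.val_inv_mul, one_smul, sub_self]

/-- The corestriction of `corefl` to the orthogonal complement. -/
noncomputable def coreflN (v : M) (hv : IsUnit (φ v v)) :
    M →ₗ[R] ↥(LinearMap.ker (φ v)) :=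
  (corefl φ v hv).codRestrict _ (corefl_mem φ v hv)

lemma coreflN_of_mem (v : M) (hv : IsUnit (φ v v)) (x : ↥(LinearMap.ker (φ v))) :
    coreflN φ v hv ↑x = x :=
  Subtype.ext (corefl_of_mem φ v hv x.2)

lemma coreflN_self (v : M) (hv : IsUnit (φ v v)) : coreflN φ v hv v = 0 :=
  Subtype.ext (corefl_self φ v hv)

/-- Splitting `M` as `R × v^⊥` for a vector `v` of unit length. -/
noncomputable def splitEquiv (v : M) (hv : IsUnit (φ v v)) :
    (R × ↥(LinearMap.ker (φ v))) ≃ₗ[R] M := by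
  refine LinearEquiv.ofLinear
    ((LinearMap.toSpanSingleton R M v) ∘ₗ (LinearMap.fst R R _)
      + (LinearMap.ker (φ v)).subtype ∘ₗ (LinearMap.snd R R _))
    (LinearMap.prod (((hv.unit⁻¹ : Rˣ) : R) • (φ v)) (coreflN φ v hv)) ?_ ?_
  · apply LinearMap.ext
    intro x
    simp only [LinearMap.comp_apply, LinearMap.add_apply, LinearMap.prod_apply, Pi.prod, Function.prod_apply,
      LinearMap.fst_apply, LinearMap.snd_apply, LinearMap.toSpanSingleton_apply,
      Submodule.coe_subtype, coreflN, LinearMap.codRestrict_apply, LinearMap.id_apply,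
      LinearMap.smul_apply, smul_eq_mul]
    rw [corefl_apply]
    abel
  · apply LinearMap.ext
    intro p
    obtain ⟨r, y⟩ := p
    simp only [LinearMap.comp_apply, LinearMap.add_apply, LinearMap.prod_apply, Pi.prod,
      LinearMap.fst_apply, LinearMap.snd_apply, LinearMap.toSpanSingleton_apply,
      Submodule.coe_subtype, LinearMap.id_apply, LinearMap.smul_apply, smul_eq_mul]
    have hy : φ v ↑y = 0 := LinearMap.mem_ker.mp y.2
    refine Prod.ext ?_ ?_
    · show ((hv.unit⁻¹ : Rˣ) : R) * φ v (r • v + ↑y) = r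
      rw [map_add, map_smul, hy, add_zero, smul_eq_mul, ← mul_assoc, mul_comm _ r,
        mul_assoc, IsUnit.val_inv_mul, mul_one]
    · show coreflN φ v hv (r • v + ↑y) = y
      rw [map_add, map_smul]
      have h1 : coreflN φ v hv v = 0 := Subtype.ext (corefl_self φ v hv)
      rw [h1, smul_zero, zero_add, coreflN_of_mem]

lemma splitEquiv_apply (v : M) (hv : IsUnit (φ v v)) (r : R) (y : ↥(LinearMap.ker (φ v))) :
    splitEquiv φ v hv (r, y) = r • v + ↑y := rfl


-- new material
variable (hsymm : ∀ x y, φ x y = φ y x) (hnd : Function.Bijective fun x ↦ φ x)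

/-- The restricted form on the orthogonal complement. -/
noncomputable def formN (v : M) : ↥(LinearMap.ker (φ v)) →ₗ[R] ↥(LinearMap.ker (φ v)) →ₗ[R] R :=
  φ.compl₁₂ (LinearMap.ker (φ v)).subtype (LinearMap.ker (φ v)).subtype

lemma formN_apply (v : M) (x y : ↥(LinearMap.ker (φ v))) :
    formN φ v x y = φ ↑x ↑y := rfl

lemma finiteN [Module.Finite R M] (v : M) (hv : IsUnit (φ v v)) :
    Module.Finite R ↥(LinearMap.ker (φ v)) :=
  Module.Finite.of_surjective (coreflN φ v hv)
    (fun y => ⟨↑y, coreflN_of_mem φ v hv y⟩)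

lemma projectiveN [Module.Projective R M] (v : M) (hv : IsUnit (φ v v)) :
    Module.Projective R ↥(LinearMap.ker (φ v)) :=
  Module.Projective.of_split (LinearMap.ker (φ v)).subtype (coreflN φ v hv)
    (LinearMap.ext fun y => coreflN_of_mem φ v hv y)

lemma freeN [IsLocalRing R] [Module.Finite R M] [Module.Projective R M]
    (v : M) (hv : IsUnit (φ v v)) : Module.Free R ↥(LinearMap.ker (φ v)) := by
  have h1 := finiteN φ v hv
  have h2 := projectiveN φ v hv
  have : Module.FinitePresentation R ↥(LinearMap.ker (φ v)) :=
    Module.finitePresentation_of_projective R _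
  exact Module.free_of_flat_of_isLocalRing

lemma finrankN [IsLocalRing R] [Module.Finite R M] [Module.Projective R M]
    (v : M) (hv : IsUnit (φ v v)) :
    Module.finrank R M = Module.finrank R ↥(LinearMap.ker (φ v)) + 1 := by
  have h1 := finiteN φ v hv
  have h2 := projectiveN φ v hv
  have h3 := freeN φ v hv
  have hfreeM : Module.Free R M := by
    have : Module.FinitePresentation R M := Module.finitePresentation_of_projective R M
    exact Module.free_of_flat_of_isLocalRing
  rw [(splitEquiv φ v hv).symm.finrank_eq, Module.finrank_prod, Module.finrank_self]
  ring

include hsymm hnd in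
lemma nondegN (v : M) (hv : IsUnit (φ v v)) :
    Function.Bijective fun y : ↥(LinearMap.ker (φ v)) ↦ formN φ v y := by
  constructor
  · intro y y' h
    have key : φ ↑y = φ ↑y' := by
      apply LinearMap.ext
      intro x
      have hx : x = (((hv.unit⁻¹ : Rˣ) : R) * φ v x) • v + corefl φ v hv x := by
        rw [corefl_apply]; abel
      have hyv : φ (↑y : M) v = 0 := by rw [hsymm]; exact LinearMap.mem_ker.mp y.2
      have hy'v : φ (↑y' : M) v = 0 := by rw [hsymm]; exact LinearMap.mem_ker.mp y'.2
      have hform := congrFun (congrArg (fun g => (g : _ →ₗ[R] R).toFun) h)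
        ⟨corefl φ v hv x, corefl_mem φ v hv x⟩
      rw [hx, map_add, map_add, map_smul, map_smul, hyv, hy'v]
      simp only [smul_zero, zero_add]
      exact hform
    exact Subtype.ext (hnd.injective key)
  · intro f
    obtain ⟨w, hw⟩ := hnd.surjective (f ∘ₗ coreflN φ v hv)
    have hwv : φ v w = 0 := by
      rw [hsymm]
      have : φ w v = (f ∘ₗ coreflN φ v hv) v := by rw [← hw]
      rw [this, LinearMap.comp_apply, coreflN_self, map_zero]
    refine ⟨⟨w, LinearMap.mem_ker.mpr hwv⟩, ?_⟩
    apply LinearMap.ext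
    intro y
    show φ w ↑y = f y
    have : φ w ↑y = (f ∘ₗ coreflN φ v hv) ↑y := by rw [← hw]
    rw [this, LinearMap.comp_apply, coreflN_of_mem]
end Split

lemma isUnit_add_of_not_isUnit [IsLocalRing R] {a u : R} (ha : ¬IsUnit a)
    (hu : IsUnit u) : IsUnit (a + u) := by
  by_contra h
  have h1 : a ∈ IsLocalRing.maximalIdeal R := ha
  have h2 : a + u ∈ IsLocalRing.maximalIdeal R := h
  have : u ∈ IsLocalRing.maximalIdeal R := by
    have := Ideal.sub_mem _ h2 h1
    simpa using this
  exact this hu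

section Diag
variable {M : Type} [AddCommGroup M] [Module R M]
variable (φ : M →ₗ[R] M →ₗ[R] R)

lemma isUnit_diag {m : ℕ} (hnd : Function.Bijective fun x ↦ φ x)
    (b : Module.Basis (Fin m) R M) (horth : ∀ i j, i ≠ j → φ (b i) (b j) = 0) (i : Fin m) :
    IsUnit (φ (b i) (b i)) := by
  obtain ⟨w, hw⟩ := hnd.surjective (b.coord i)
  have h1 : φ w (b i) = 1 := by
    have : φ w = b.coord i := hw
    rw [this, Module.Basis.coord_apply, Module.Basis.repr_self, Finsupp.single_eq_same]
  have h2 : φ w (b i) = b.repr w i * φ (b i) (b i) := by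
    conv_lhs => rw [← Module.Basis.sum_repr b w]
    rw [map_sum, LinearMap.sum_apply]
    rw [Finset.sum_eq_single i]
    · rw [map_smul, LinearMap.smul_apply, smul_eq_mul]
    · intro j _ hj
      rw [map_smul, LinearMap.smul_apply, smul_eq_mul, horth j i hj, mul_zero]
    · intro hj; exact absurd (Finset.mem_univ i) hj
  exact IsUnit.of_mul_eq_one _ (by rw [mul_comm, ← h2, h1])

end Diag

lemma exists_orthBasis [IsLocalRing R] (n : ℕ) :
    ∀ {M : Type} [AddCommGroup M] [Module R M] [Module.Finite R M] [Module.Projective R M]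
      (φ : M →ₗ[R] M →ₗ[R] R), (∀ x y, φ x y = φ y x) →
      Function.Bijective (fun x ↦ φ x) → Module.finrank R M = n →
      (n = 0 ∨ ∃ v, IsUnit (φ v v)) →
      ∃ b : Module.Basis (Fin n) R M, ∀ i j, i ≠ j → φ (b i) (b j) = 0 := by
  induction n with
  | zero =>
    intro M _ _ _ _ φ hsymm hnd hrank _
    have hfreeM : Module.Free R M := by
      have : Module.FinitePresentation R M := Module.finitePresentation_of_projective R M
      exact Module.free_of_flat_of_isLocalRing
    exact ⟨(Module.finBasis R M).reindex (finCongr hrank), fun i j _ => i.elim0⟩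
  | succ n ih =>
    intro M _ _ _ _ φ hsymm hnd hrank hex
    obtain ⟨v, hv⟩ := hex.resolve_left (Nat.succ_ne_zero n)
    have main : ∃ w, ∃ hw : IsUnit (φ w w),
        (n = 0 ∨ ∃ z, z ∈ LinearMap.ker (φ w) ∧ IsUnit (φ z z)) := by
      by_cases hn : n = 0
      · exact ⟨v, hv, Or.inl hn⟩
      · have hfin := finiteN φ v hv
        have hproj := projectiveN φ v hv
        have hfree := freeN φ v hv
        have hndN := nondegN φ hsymm hnd v hv
        have hrN : Module.finrank R ↥(LinearMap.ker (φ v)) = n := by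
          have := finrankN φ v hv; omega
        by_cases hcase : ∃ z : ↥(LinearMap.ker (φ v)), IsUnit (φ ↑z ↑z)
        · obtain ⟨z, hz⟩ := hcase
          refine ⟨↑z, hz, Or.inr ⟨v, ?_, hv⟩⟩
          exact LinearMap.mem_ker.mpr (by rw [hsymm]; exact LinearMap.mem_ker.mp z.2)
        · push_neg at hcase
          let bN := Module.finBasis R ↥(LinearMap.ker (φ v))
          have hpos : 0 < Module.finrank R ↥(LinearMap.ker (φ v)) := by omega
          let i0 : Fin (Module.finrank R ↥(LinearMap.ker (φ v))) := ⟨0, hpos⟩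
          obtain ⟨x, hx⟩ := hnd.surjective ((bN.coord i0) ∘ₗ coreflN φ v hv)
          have hx' : φ x = (bN.coord i0) ∘ₗ coreflN φ v hv := hx
          have hymem : (↑(bN i0) : M) ∈ LinearMap.ker (φ v) := (bN i0).2
          have hxy : φ x ↑(bN i0) = 1 := by
            rw [hx', LinearMap.comp_apply, coreflN_of_mem, Module.Basis.coord_apply,
              Module.Basis.repr_self, Finsupp.single_eq_same]
          have hxv : φ v x = 0 := by
            rw [hsymm, hx', LinearMap.comp_apply, coreflN_self, map_zero]
          have hxmem : x ∈ LinearMap.ker (φ v) := LinearMap.mem_ker.mpr hxv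
          have ha : ¬IsUnit (φ x x) := hcase ⟨x, hxmem⟩
          have hb : ¬IsUnit (φ ↑(bN i0) ↑(bN i0)) := hcase (bN i0)
          have e1 : φ (x + v) = φ x + φ v := map_add φ x v
          have hww : φ (x + v) (x + v) = φ x x + φ v v := by
            rw [map_add, e1, LinearMap.add_apply, LinearMap.add_apply]
            rw [show φ x v = 0 by rw [hsymm]; exact hxv, hxv]
            ring
          have hw : IsUnit (φ (x + v) (x + v)) := by
            rw [hww]; exact isUnit_add_of_not_isUnit ha hv
          refine ⟨x + v, hw, Or.inr ?_⟩
          have hwy : φ (x + v) ↑(bN i0) = 1 := by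
            rw [e1, LinearMap.add_apply, hxy, LinearMap.mem_ker.mp hymem, add_zero]
          set c : R := ((hw.unit⁻¹ : Rˣ) : R) with hcdef
          set z : M := ↑(bN i0) - c • (x + v) with hzdef
          have hwz : φ (x + v) z = 0 := by
            rw [hzdef, map_sub, map_smul, hwy, smul_eq_mul, hcdef, IsUnit.val_inv_mul,
              sub_self]
          have hyz : φ (↑(bN i0) : M) z = φ ↑(bN i0) ↑(bN i0) - c := by
            rw [hzdef, map_sub, map_smul, smul_eq_mul, hsymm _ (x + v), hwy, mul_one]
          have hzz : φ z z = φ ↑(bN i0) ↑(bN i0) - c := by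
            have e2 : φ z = φ ↑(bN i0) - c • φ (x + v) := by
              rw [hzdef, map_sub, map_smul]
            rw [e2, LinearMap.sub_apply, LinearMap.smul_apply, smul_eq_mul, hwz, mul_zero,
              sub_zero, hyz]
          refine ⟨z, LinearMap.mem_ker.mpr hwz, ?_⟩
          rw [hzz]
          have hneg : IsUnit (-c) := (hw.unit⁻¹).isUnit.neg
          have := isUnit_add_of_not_isUnit hb hneg
          rwa [← sub_eq_add_neg] at this
    obtain ⟨w, hw, hz⟩ := main
    have hfin := finiteN φ w hw
    have hproj := projectiveN φ w hw
    have hfree := freeN φ w hw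
    have hndN := nondegN φ hsymm hnd w hw
    have hrN : Module.finrank R ↥(LinearMap.ker (φ w)) = n := by
      have := finrankN φ w hw; omega
    have hsymmN : ∀ x y, formN φ w x y = formN φ w y x := fun x y => hsymm ↑x ↑y
    have hexN : n = 0 ∨ ∃ z' : ↥(LinearMap.ker (φ w)), IsUnit (formN φ w z' z') := by
      rcases hz with h | ⟨z, hzm, hzu⟩
      · exact Or.inl h
      · exact Or.inr ⟨⟨z, hzm⟩, hzu⟩
    obtain ⟨cB, hcB⟩ := ih (formN φ w) hsymmN hndN hrN hexN
    let B1 : Module.Basis (Fin 1 ⊕ Fin n) R M :=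
      ((Module.Basis.singleton (Fin 1) R).prod cB).map (splitEquiv φ w hw)
    have hB1inl : B1 (Sum.inl 0) = w := by
      simp only [B1, Module.Basis.map_apply, Module.Basis.prod_apply, Sum.elim_inl, Function.comp_apply,
        Module.Basis.singleton_apply, LinearMap.coe_inl]
      rw [show ((1 : R), (0 : ↥(LinearMap.ker (φ w)))) = ((1 : R),
        (0 : ↥(LinearMap.ker (φ w)))) from rfl, splitEquiv_apply]
      simp
    have hB1inr : ∀ i, B1 (Sum.inr i) = ↑(cB i) := by
      intro i
      simp only [B1, Module.Basis.map_apply, Module.Basis.prod_apply, Sum.elim_inr, Function.comp_apply,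
        LinearMap.coe_inr]
      rw [splitEquiv_apply]
      simp
    have hB1 : ∀ s t, s ≠ t → φ (B1 s) (B1 t) = 0 := by
      intro s t hst
      rcases s with s | s <;> rcases t with t | t
      · exact absurd (congrArg Sum.inl (Subsingleton.elim s t)) hst
      · rw [Subsingleton.elim s 0, hB1inl, hB1inr]
        exact LinearMap.mem_ker.mp (cB t).2
      · rw [Subsingleton.elim t 0, hB1inl, hB1inr, hsymm]
        exact LinearMap.mem_ker.mp (cB s).2
      · rw [hB1inr, hB1inr]
        exact hcB s t (fun h => hst (congrArg Sum.inr h))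
    refine ⟨B1.reindex (finSumFinEquiv.trans (finCongr (by omega))), fun i j hij => ?_⟩
    rw [Module.Basis.reindex_apply, Module.Basis.reindex_apply]
    exact hB1 _ _ ((finSumFinEquiv.trans (finCongr (by omega))).symm.injective.ne hij)

lemma isometric_diag (W : SymBilSpace R) {m : ℕ} (b : Module.Basis (Fin m) R W.M)
    (horth : ∀ i j, i ≠ j → W.form (b i) (b j) = 0) (d : Fin m → Rˣ)
    (hd : ∀ i, ((d i : R)) = W.form (b i) (b i)) :
    W.Isometric (diagSpace m d) := by
  refine ⟨b.equivFun, fun x y => ?_⟩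
  show ∑ i, (d i : R) * b.equivFun x i * b.equivFun y i = W.form x y
  simp only [Module.Basis.equivFun_apply]
  conv_rhs => rw [← Module.Basis.sum_repr b x]
  rw [map_sum, LinearMap.sum_apply]
  refine Finset.sum_congr rfl fun i _ => ?_
  rw [map_smul, LinearMap.smul_apply, smul_eq_mul]
  have key : W.form (b i) y = b.repr y i * W.form (b i) (b i) := by
    conv_lhs => rw [← Module.Basis.sum_repr b y]
    rw [map_sum, Finset.sum_eq_single i]
    · rw [map_smul, smul_eq_mul]
    · intro j _ hj
      rw [map_smul, smul_eq_mul, horth i j (Ne.symm hj), mul_zero]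
    · intro h; exact absurd (Finset.mem_univ i) h
  rw [key, ← hd]
  ring

theorem statement10' (R : Type) [CommRing R] [IsLocalRing R] :
    (AddSubgroup.closure {x : GW R | ∃ a : Rˣ, x = GWclass (SymBilSpace.unit R a)} = ⊤) ∧
    ∀ V : SymBilSpace R,
      (∃ b : Module.Basis (Fin (Module.finrank R (V.orthSum (SymBilSpace.unit R 1)).M)) R
          (V.orthSum (SymBilSpace.unit R 1)).M,
        ∀ i j, i ≠ j → (V.orthSum (SymBilSpace.unit R 1)).form (b i) (b j) = 0) ∧
      ∃ (m : ℕ) (a : Fin m → Rˣ),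
        GWclass V
          = (∑ i, GWclass (SymBilSpace.unit R (a i))) - GWclass (SymBilSpace.unit R 1) := by
  have part2 : ∀ V : SymBilSpace R,
      (∃ b : Module.Basis (Fin (Module.finrank R (V.orthSum (SymBilSpace.unit R 1)).M)) R
          (V.orthSum (SymBilSpace.unit R 1)).M,
        ∀ i j, i ≠ j → (V.orthSum (SymBilSpace.unit R 1)).form (b i) (b j) = 0) ∧
      ∃ (m : ℕ) (a : Fin m → Rˣ),
        GWclass V
          = (∑ i, GWclass (SymBilSpace.unit R (a i))) - GWclass (SymBilSpace.unit R 1) := by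
    intro V
    set W := V.orthSum (SymBilSpace.unit R 1) with hW
    haveI := W.finite
    haveI := W.projective
    have hv : IsUnit (W.form ((0 : V.M), (1 : R)) ((0 : V.M), (1 : R))) := by
      have : W.form ((0 : V.M), (1 : R)) ((0 : V.M), (1 : R)) = 1 := by
        show V.form 0 0 + _ = 1
        simp [SymBilSpace.unit, LinearMap.compl₁₂_apply]
        exact mul_one 1
      rw [this]; exact isUnit_one
    obtain ⟨b, hb⟩ := exists_orthBasis (Module.finrank R W.M) W.form W.symm W.nondeg rfl
      (Or.inr ⟨_, hv⟩)
    refine ⟨⟨b, hb⟩, Module.finrank R W.M, fun i => (isUnit_diag W.form W.nondeg b hb i).unit,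
      ?_⟩
    rw [eq_sub_iff_add_eq, ← GWclass_orthSum,
      GWclass_isometric (isometric_diag W b hb _ (fun i => IsUnit.unit_spec _)),
      GWclass_diag]
  refine ⟨?_, part2⟩
  rw [eq_top_iff]
  rintro g -
  refine AddCon.induction_on g (fun x => ?_)
  show (gwCon R).mk' x ∈ _
  refine FreeAbelianGroup.induction_on x ?_ ?_ ?_ ?_
  · rw [map_zero]; exact zero_mem _
  · intro V
    obtain ⟨-, m, a, ha⟩ := part2 V
    show GWclass V ∈ _
    rw [ha]
    exact sub_mem
      (sum_mem fun i _ => AddSubgroup.subset_closure ⟨a i, rfl⟩)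
      (AddSubgroup.subset_closure ⟨1, rfl⟩)
  · intro V hV
    rw [map_neg]; exact neg_mem hV
  · intro x y hx hy
    rw [map_add]; exact add_mem hx hy

/-- **Statement 10.** Over a local ring `R`, the Grothendieck–Witt group `GW(R)` is generated
as a group by the classes `⟨a⟩` for units `a ∈ Rˣ`.  In fact, for every symmetric bilinear
space `(M, φ)` over `R`, the orthogonal sum `(M, φ) ⊥ ⟨1⟩` admits an orthogonal basis, so
`[M, φ] = Σᵢ [⟨aᵢ⟩] − [⟨1⟩]` for suitable units `aᵢ`. -/
theorem statement10 (R : Type) [CommRing R] [IsLocalRing R] :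
    (AddSubgroup.closure {x : GW R | ∃ a : Rˣ, x = GWclass (SymBilSpace.unit R a)} = ⊤) ∧
    ∀ V : SymBilSpace R,
      (∃ b : Module.Basis (Fin (Module.finrank R (V.orthSum (SymBilSpace.unit R 1)).M)) R
          (V.orthSum (SymBilSpace.unit R 1)).M,
        ∀ i j, i ≠ j → (V.orthSum (SymBilSpace.unit R 1)).form (b i) (b j) = 0) ∧
      ∃ (m : ℕ) (a : Fin m → Rˣ),
        GWclass V
          = (∑ i, GWclass (SymBilSpace.unit R (a i))) - GWclass (SymBilSpace.unit R 1) :=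
  statement10' R
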